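/- Let λ, μ, D > 0, R = D/2, r = μR/λ. Consider f(x,y) = -(λ/2)x² + μxy on [-r, r] × [-R, R], the primal function φ(x) = max_{y ∈ [-R,R]} f(x,y) = λ(-x²/2 + r|x|), and the Moreau envelope φ_{2λ}(x) = min_{u ∈ [-r,r]} { φ(u) + λ(u - x)² }. Then φ_{2λ} is differentiable at x* = r/2 and |φ_{2λ}'(x*)| = μR, i.e., equals μD/2. -/

import Mathlib

/-- Proposition 4.1(1) core computation: the Moreau envelope of φ(u) = λ(-u²/2 + r|u|)
over [-r, r] is differentiable at x* = r/2 with |φ'_{2λ}(x*)| = μR = μD/2. -/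
theorem stmt9 (lam mu D : ℝ) (hlam : 0 < lam) (hmu : 0 < mu) (hD : 0 < D) :
    let R := D / 2
    let r := mu * R / lam
    let φ : ℝ → ℝ := fun u => lam * (-u ^ 2 / 2 + r * |u|)
    let env : ℝ → ℝ := fun x => sInf ((fun u => φ u + lam * (u - x) ^ 2) '' Set.Icc (-r) r)
    ∃ d : ℝ, HasDerivAt env d (r / 2) ∧ |d| = mu * R ∧ |d| = mu * D / 2 := by
  intro R r φ env
  have hR : 0 < R := by positivity
  have hr : 0 < r := by positivity
  set g : ℝ → ℝ := fun x => lam * x ^ 2 - lam / 2 * (max (2 * x - r) 0) ^ 2 with hg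
  -- lower bound
  have lb : ∀ x ∈ Set.Ioo (0:ℝ) r, ∀ u ∈ Set.Icc (-r) r, g x ≤ φ u + lam * (u - x) ^ 2 := by
    rintro x ⟨hx0, hxr⟩ u ⟨hu1, hu2⟩
    simp only [hg, φ]
    rcases le_or_gt 0 u with hu | hu
    · rw [abs_of_nonneg hu]
      rcases le_or_gt (2 * x - r) 0 with hm | hm
      · rw [max_eq_right hm]
        nlinarith [sq_nonneg u, mul_nonneg hu (by linarith : (0:ℝ) ≤ r - 2 * x)]
      · rw [max_eq_left hm.le]
        nlinarith [sq_nonneg (u - (2 * x - r))]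
    · rw [abs_of_neg hu]
      have hmax : (0:ℝ) ≤ max (2 * x - r) 0 := le_max_right _ _
      nlinarith [sq_nonneg u, sq_nonneg (max (2 * x - r) 0),
        mul_nonneg (by linarith : (0:ℝ) ≤ -u) (by linarith : (0:ℝ) ≤ r + 2 * x)]
  -- attained
  have mem : ∀ x ∈ Set.Ioo (0:ℝ) r,
      g x ∈ (fun u => φ u + lam * (u - x) ^ 2) '' Set.Icc (-r) r := by
    rintro x ⟨hx0, hxr⟩
    refine ⟨max (2 * x - r) 0, ⟨?_, ?_⟩, ?_⟩
    · exact le_trans (by linarith) (le_max_right _ _)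
    · exact max_le (by linarith) (by linarith)
    · simp only [hg, φ]
      rcases le_or_gt (2 * x - r) 0 with hm | hm
      · rw [max_eq_right hm]
        simp [abs_of_nonneg]
      · rw [max_eq_left hm.le, abs_of_nonneg (by linarith : (0:ℝ) ≤ 2 * x - r)]
        ring
  have key : ∀ x ∈ Set.Ioo (0:ℝ) r, env x = g x := by
    intro x hx
    refine le_antisymm (csInf_le ⟨g x, ?_⟩ (mem x hx)) (le_csInf ⟨_, mem x hx⟩ ?_)
    · rintro v ⟨u, hu, rfl⟩
      exact lb x hx u hu
    · rintro v ⟨u, hu, rfl⟩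
      exact lb x hx u hu
  -- derivative of g
  have h2 : HasDerivAt (fun x : ℝ => (max (2 * x - r) 0) ^ 2) 0 (r / 2) := by
    rw [hasDerivAt_iff_tendsto_slope]
    have hval : max (2 * (r / 2) - r) 0 = 0 := by
      rw [max_eq_right] <;> linarith
    apply squeeze_zero_norm (a := fun y => 4 * |y - r / 2|)
    · intro y
      rcases eq_or_ne y (r / 2) with h | h
      · simp [slope, h, hval]
      · have hy : y - r / 2 ≠ 0 := sub_ne_zero.mpr h
        have hmn : (0:ℝ) ≤ max (2 * y - r) 0 := le_max_right _ _
        have hbound : (max (2 * y - r) 0) ^ 2 ≤ 4 * (y - r / 2) ^ 2 := by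
          rcases le_or_gt (2 * y - r) 0 with hm | hm
          · rw [max_eq_right hm]; nlinarith [sq_nonneg (y - r / 2)]
          · rw [max_eq_left hm.le]; nlinarith
        have : slope (fun x : ℝ => (max (2 * x - r) 0) ^ 2) (r / 2) y
            = (max (2 * y - r) 0) ^ 2 / (y - r / 2) := by
          simp [slope, hval, vsub_eq_sub]
          ring
        rw [this, Real.norm_eq_abs, abs_div]
        rw [div_le_iff₀ (abs_pos.mpr hy)]
        rw [abs_of_nonneg (by positivity)]
        calc (max (2 * y - r) 0) ^ 2 ≤ 4 * (y - r / 2) ^ 2 := hbound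
          _ = 4 * |y - r / 2| * |y - r / 2| := by rw [mul_assoc, abs_mul_abs_self, sq]
    · have : Continuous (fun y : ℝ => 4 * |y - r / 2|) :=
        continuous_const.mul ((continuous_id.sub continuous_const).abs)
      have := this.tendsto (r / 2)
      simp only [sub_self, abs_zero, mul_zero] at this
      exact this.mono_left nhdsWithin_le_nhds
  have h1 : HasDerivAt (fun x : ℝ => lam * x ^ 2) (lam * r) (r / 2) := by
    have := (hasDerivAt_pow 2 (r / 2)).const_mul lam
    exact this.congr_deriv (by rw [show (2:ℕ) - 1 = 1 from rfl]; push_cast; ring)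
  have hgd : HasDerivAt g (lam * r) (r / 2) := by
    have := h1.sub (h2.const_mul (lam / 2))
    exact this.congr_deriv (by ring)
  refine ⟨lam * r, ?_, ?_, ?_⟩
  · apply hgd.congr_of_eventuallyEq
    filter_upwards [Ioo_mem_nhds (by linarith : (0:ℝ) < r / 2) (by linarith : r / 2 < r)]
      with x hx using key x hx
  · rw [abs_of_pos (by positivity)]
    field_simp [r]
    simp only [r]; field_simp
  · rw [abs_of_pos (by positivity)]
    field_simp [r, R]
    simp only [r, R]; field_simp
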